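/- Let q = 2^s, F = 𝔽_{q²}, n = 2q², and let (a₁,b₁),…,(a_n,b_n) be an enumeration of all pairs in F × F with b_k² + b_k = a_k^{q+1}. For a nonnegative integer m let C_m ⊆ F^n be the F-linear span of the vectors ((a_k)^i (b_k)^j)_{k=1,…,n} over all pairs (i,j) of nonnegative integers with j ≤ 1 and 2i + (q+1)j ≤ m. If m ≤ 2q − 2, then C_m is Hermitian self-orthogonal: for all u, v ∈ C_m, Σ_{k=1}^n u_k (v_k)^q = 0. -/

import Mathlib

set_option maxHeartbeats 1000000

lemma aux_iter {F : Type} [Field F] [CharP F 2] (b c : F) (hb : b ^ 2 + b = c) (k : ℕ) :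
    b ^ 2 ^ k = b + ∑ t ∈ Finset.range k, c ^ 2 ^ t := by
  have h2 : (2 : F) = 0 := CharTwo.two_eq_zero
  induction k with
  | zero => simp
  | succ k ih =>
    have h1 : b ^ 2 ^ (k + 1) = (b ^ 2 ^ k) ^ 2 := by rw [← pow_mul, pow_succ]
    have hfr : ∀ x y : F, (x + y) ^ 2 = x ^ 2 + y ^ 2 := fun x y => by
      linear_combination (x * y) * h2
    have hsum := map_sum (frobenius F 2) (fun t => c ^ 2 ^ t) (Finset.range k)
    simp only [frobenius_def] at hsum
    rw [h1, ih, hfr, hsum, Finset.sum_range_succ']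
    have hre : ∀ t, (c ^ 2 ^ t) ^ 2 = c ^ 2 ^ (t + 1) := fun t => by
      rw [← pow_mul, pow_succ]
    rw [Finset.sum_congr rfl fun t _ => hre t]
    simp only [pow_zero, pow_one]
    linear_combination hb - b * h2

lemma aux_transfer {F : Type} [Field F] [Fintype F] [DecidableEq F] {q n : ℕ}
    (pt : Fin n → F × F) (hinj : Function.Injective pt)
    (hrange : ∀ p : F × F, p ∈ Set.range pt ↔ p.2 ^ 2 + p.2 = p.1 ^ (q + 1))
    {M : Type} [AddCommMonoid M] (g : F → F → M) :
    ∑ k, g (pt k).1 (pt k).2 =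
      ∑ a : F, ∑ b ∈ Finset.univ.filter (fun b => b ^ 2 + b = a ^ (q + 1)), g a b := by
  have h1 : ∑ k, g (pt k).1 (pt k).2 =
      ∑ p ∈ Finset.univ.filter (fun p : F × F => p.2 ^ 2 + p.2 = p.1 ^ (q + 1)), g p.1 p.2 := by
    refine Finset.sum_bij (fun k _ => pt k) ?_ ?_ ?_ ?_
    · intro k _
      simp only [Finset.mem_filter, Finset.mem_univ, true_and]
      exact (hrange (pt k)).mp ⟨k, rfl⟩
    · intro k _ l _ h
      exact hinj h
    · intro p hp
      simp only [Finset.mem_filter, Finset.mem_univ, true_and] at hp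
      obtain ⟨k, hk⟩ := (hrange p).mpr hp
      exact ⟨k, Finset.mem_univ k, hk⟩
    · intro k _; rfl
  rw [h1, Finset.sum_filter, Fintype.sum_prod_type]
  refine Finset.sum_congr rfl fun a _ => ?_
  rw [Finset.sum_filter]

theorem first_curve_hermitian_self_orthogonal (s : ℕ) (hs : 0 < s) (q : ℕ) (hq : q = 2 ^ s)
    (F : Type) [Field F] [Fintype F] (hF : Fintype.card F = q ^ 2)
    (n : ℕ) (hn : n = 2 * q ^ 2)
    (pt : Fin n → F × F) (hinj : Function.Injective pt)
    (hrange : ∀ p : F × F, p ∈ Set.range pt ↔ p.2 ^ 2 + p.2 = p.1 ^ (q + 1))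
    (C : ℕ → Submodule F (Fin n → F))
    (hC : ∀ m : ℕ, C m = Submodule.span F
      {v : Fin n → F | ∃ i j : ℕ, j ≤ 1 ∧ 2 * i + (q + 1) * j ≤ m ∧
        v = fun k => (pt k).1 ^ i * (pt k).2 ^ j})
    (m : ℕ) (hm : m ≤ 2 * q - 2) :
    ∀ u ∈ C m, ∀ v ∈ C m, ∑ k, u k * (v k) ^ q = 0 := by
  letI : DecidableEq F := Classical.decEq F
  -- basic facts
  have hq2 : 2 ≤ q := by
    rw [hq]
    calc 2 = 2 ^ 1 := rfl
    _ ≤ 2 ^ s := Nat.pow_le_pow_right (by norm_num) hs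
  have hq0 : q ≠ 0 := by omega
  -- characteristic 2
  have h2 : (2 : F) = 0 := by
    have h := FiniteField.cast_card_eq_zero F
    rw [hF, hq] at h
    push_cast at h
    rw [← pow_mul] at h
    exact pow_eq_zero_iff (by positivity) |>.mp h
  have hr2 : ringChar F = 2 := by
    have hd : ringChar F ∣ 2 := ringChar.dvd (by exact_mod_cast h2)
    haveI := ringChar.charP F
    have hprime : (ringChar F).Prime := CharP.char_is_prime F (ringChar F)
    rcases (Nat.dvd_prime Nat.prime_two).mp hd with h1 | h1
    · exact absurd h1 hprime.ne_one
    · exact h1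
  haveI hchar : CharP F 2 := hr2 ▸ ringChar.charP F
  haveI : Fact (Nat.Prime 2) := ⟨Nat.prime_two⟩
  have hfrob : ∀ x y : F, (x + y) ^ q = x ^ q + y ^ q := by
    intro x y
    rw [hq]
    exact add_pow_char_pow x y 2 s
  -- power sums
  have hps : ∀ N : ℕ, N < q ^ 2 - 1 → ∑ a : F, a ^ N = 0 := by
    intro N hN
    exact FiniteField.sum_pow_lt_card_sub_one F N (by rwa [hF])
  -- fibers
  have hbne : ∀ b₀ : F, b₀ ≠ b₀ + 1 := by
    intro b₀ h
    exact one_ne_zero (left_eq_add.mp h)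
  have hfiber_eq : ∀ a b₀ : F, b₀ ^ 2 + b₀ = a ^ (q + 1) →
      Finset.univ.filter (fun b => b ^ 2 + b = a ^ (q + 1)) = {b₀, b₀ + 1} := by
    intro a b₀ h
    ext b
    simp only [Finset.mem_filter, Finset.mem_univ, true_and, Finset.mem_insert,
      Finset.mem_singleton]
    constructor
    · intro hb
      have hd : (b + b₀) * (b + b₀ + 1) = 0 := by
        linear_combination hb + h + (b * b₀ + a ^ (q + 1)) * h2
      rcases mul_eq_zero.mp hd with h0 | h1
      · left; linear_combination h0 - b₀ * h2
      · right; linear_combination h1 - (b₀ + 1) * h2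
    · rintro (rfl | rfl)
      · exact h
      · linear_combination h + (b₀ + 1) * h2
  have hex : ∀ a : F, ∃ b : F, b ^ 2 + b = a ^ (q + 1) := by
    by_contra hcon
    push_neg at hcon
    obtain ⟨a₀, ha₀⟩ := hcon
    have hcount : ∑ a : F,
        (Finset.univ.filter (fun b => b ^ 2 + b = a ^ (q + 1))).card = n := by
      have := aux_transfer pt hinj hrange (fun _ _ => (1 : ℕ))
      simpa using this.symm
    have h0 : (Finset.univ.filter (fun b => b ^ 2 + b = a₀ ^ (q + 1))).card = 0 := by
      rw [Finset.card_eq_zero, Finset.filter_eq_empty_iff]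
      intro b _
      exact ha₀ b
    have hle : ∀ a : F, (Finset.univ.filter (fun b => b ^ 2 + b = a ^ (q + 1))).card ≤ 2 := by
      intro a
      by_cases hne : ∃ b : F, b ^ 2 + b = a ^ (q + 1)
      · obtain ⟨b₀, hb₀⟩ := hne
        rw [hfiber_eq a b₀ hb₀]
        exact (Finset.card_insert_le _ _).trans (by simp)
      · push_neg at hne
        rw [Finset.card_eq_zero.mpr (Finset.filter_eq_empty_iff.mpr fun b _ => hne b)]
        omega
    have hlt : ∑ a : F,
        (Finset.univ.filter (fun b => b ^ 2 + b = a ^ (q + 1))).card < ∑ _a : F, 2 :=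
      Finset.sum_lt_sum (fun i _ => hle i) ⟨a₀, Finset.mem_univ _, by rw [h0]; norm_num⟩
    rw [hcount] at hlt
    simp only [Finset.sum_const, Finset.card_univ, smul_eq_mul, hF, hn] at hlt
    omega
  have hfib : ∀ a : F, ∃ b₀ : F, b₀ ^ 2 + b₀ = a ^ (q + 1) ∧
      Finset.univ.filter (fun b => b ^ 2 + b = a ^ (q + 1)) = {b₀, b₀ + 1} := by
    intro a
    obtain ⟨b, hb⟩ := hex a
    exact ⟨b, hb, hfiber_eq a b hb⟩
  -- the key generator computation
  have key : ∀ i j i' j' : ℕ, j ≤ 1 → j' ≤ 1 →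
      2 * i + (q + 1) * j ≤ m → 2 * i' + (q + 1) * j' ≤ m →
      ∑ k, ((pt k).1 ^ i * (pt k).2 ^ j) * ((pt k).1 ^ i' * (pt k).2 ^ j') ^ q = 0 := by
    intro i j i' j' hj hj' hiu hiv
    have htr := aux_transfer pt hinj hrange
      (fun a b => (a ^ i * b ^ j) * (a ^ i' * b ^ j') ^ q)
    rw [htr]
    clear htr
    interval_cases j <;> interval_cases j'
    · -- j = 0, j' = 0
      apply Finset.sum_eq_zero
      intro a _
      obtain ⟨b₀, hb₀, hfa⟩ := hfib a
      rw [hfa, Finset.sum_pair (hbne b₀)]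
      simp only [pow_zero, mul_one, one_mul]
      linear_combination (a ^ i * (a ^ i') ^ q) * h2
    · -- j = 0, j' = 1
      have hbound : i + q * i' < q ^ 2 - 1 := by
        have e1 : 2 * i' + 3 ≤ q := by omega
        have e2 : i + 1 ≤ q := by omega
        have e3 : q * (2 * i' + 3) ≤ q * q := Nat.mul_le_mul_left q e1
        have e4 : i + q * i' + 1 + 1 ≤ q ^ 2 := by rw [pow_two]; nlinarith [e2, e3]
        exact Nat.lt_of_succ_le (Nat.le_sub_of_add_le e4)
      calc ∑ a : F, ∑ b ∈ Finset.univ.filter (fun b => b ^ 2 + b = a ^ (q + 1)),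
            (a ^ i * b ^ 0) * (a ^ i' * b ^ 1) ^ q
          = ∑ a : F, a ^ (i + q * i') := by
            refine Finset.sum_congr rfl fun a _ => ?_
            obtain ⟨b₀, hb₀, hfa⟩ := hfib a
            rw [hfa, Finset.sum_pair (hbne b₀)]
            have hb1 : (b₀ + 1) ^ q = b₀ ^ q + 1 := by rw [hfrob, one_pow]
            simp only [pow_zero, pow_one, one_mul, mul_one, mul_pow]
            rw [hb1]
            linear_combination (a ^ i * (a ^ i') ^ q * b₀ ^ q) * h2
        _ = 0 := hps _ hbound
    · -- j = 1, j' = 0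
      have hbound : i + q * i' < q ^ 2 - 1 := by
        have e1 : 2 * i + 3 ≤ q := by omega
        have e2 : i' + 1 ≤ q := by omega
        have e3 : q * (i' + 1) ≤ q * q := Nat.mul_le_mul_left q e2
        have e4 : i + q * i' + 1 + 1 ≤ q ^ 2 := by rw [pow_two]; nlinarith [e1, e3]
        exact Nat.lt_of_succ_le (Nat.le_sub_of_add_le e4)
      calc ∑ a : F, ∑ b ∈ Finset.univ.filter (fun b => b ^ 2 + b = a ^ (q + 1)),
            (a ^ i * b ^ 1) * (a ^ i' * b ^ 0) ^ q
          = ∑ a : F, a ^ (i + q * i') := by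
            refine Finset.sum_congr rfl fun a _ => ?_
            obtain ⟨b₀, hb₀, hfa⟩ := hfib a
            rw [hfa, Finset.sum_pair (hbne b₀)]
            simp only [pow_zero, pow_one, one_mul, mul_one, mul_pow]
            linear_combination (a ^ i * (a ^ i') ^ q * b₀) * h2
        _ = 0 := hps _ hbound
    · -- j = 1, j' = 1
      have e1 : 2 * i + 3 ≤ q := by omega
      have e1' : 2 * i' + 3 ≤ q := by omega
      have hbound0 : i + q * i' < q ^ 2 - 1 := by
        have e3 : q * (2 * i' + 3) ≤ q * q := Nat.mul_le_mul_left q e1'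
        have e4 : i + q * i' + 1 + 1 ≤ q ^ 2 := by rw [pow_two]; nlinarith [e1, e3]
        exact Nat.lt_of_succ_le (Nat.le_sub_of_add_le e4)
      have hboundt : ∀ t ∈ Finset.range s, i + q * i' + (q + 1) * 2 ^ t < q ^ 2 - 1 := by
        intro t ht
        have ht' : t + 1 ≤ s := by
          have := Finset.mem_range.mp ht; omega
        have het : 2 ^ t * 2 ≤ q := by
          rw [← pow_succ, hq]
          exact Nat.pow_le_pow_right (by norm_num) ht'
        have e3 : q * (2 * i' + 3) ≤ q * q := Nat.mul_le_mul_left q e1'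
        have e5 : (q + 1) * (2 ^ t * 2) ≤ (q + 1) * q := Nat.mul_le_mul_left (q + 1) het
        have e4 : i + q * i' + (q + 1) * 2 ^ t + 1 + 1 ≤ q ^ 2 := by
          rw [pow_two]; nlinarith [e1, e3, e5, hq2]
        exact Nat.lt_of_succ_le (Nat.le_sub_of_add_le e4)
      calc ∑ a : F, ∑ b ∈ Finset.univ.filter (fun b => b ^ 2 + b = a ^ (q + 1)),
            (a ^ i * b ^ 1) * (a ^ i' * b ^ 1) ^ q
          = ∑ a : F, (∑ t ∈ Finset.range s, a ^ (i + q * i' + (q + 1) * 2 ^ t)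
              + a ^ (i + q * i')) := by
            refine Finset.sum_congr rfl fun a _ => ?_
            obtain ⟨b₀, hb₀, hfa⟩ := hfib a
            rw [hfa, Finset.sum_pair (hbne b₀)]
            have hbq : b₀ ^ q = b₀ + ∑ t ∈ Finset.range s, (a ^ (q + 1)) ^ 2 ^ t := by
              have h := aux_iter b₀ (a ^ (q + 1)) hb₀ s
              rwa [← hq] at h
            have hb1q : (b₀ + 1) ^ q = b₀ ^ q + 1 := by rw [hfrob, one_pow]
            have hT : ∑ t ∈ Finset.range s, a ^ (i + q * i' + (q + 1) * 2 ^ t)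
                = a ^ (i + q * i') * ∑ t ∈ Finset.range s, (a ^ (q + 1)) ^ 2 ^ t := by
              rw [Finset.mul_sum]
              refine Finset.sum_congr rfl fun t _ => ?_
              rw [← pow_mul, ← pow_add]
            rw [hT]
            set T := ∑ t ∈ Finset.range s, (a ^ (q + 1)) ^ 2 ^ t with hTdef
            simp only [pow_one, mul_pow]
            rw [hb1q, hbq]
            linear_combination (a ^ i * (a ^ i') ^ q * (b₀ ^ 2 + b₀ * T + b₀)) * h2
        _ = 0 := by
            rw [Finset.sum_add_distrib, Finset.sum_comm, hps _ hbound0, add_zero]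
            exact Finset.sum_eq_zero fun t ht => hps _ (hboundt t ht)
  -- span induction
  intro u hu v hv
  rw [hC m] at hu hv
  have inner : ∀ gi gj : ℕ, gj ≤ 1 → 2 * gi + (q + 1) * gj ≤ m →
      ∑ k, ((pt k).1 ^ gi * (pt k).2 ^ gj) * v k ^ q = 0 := by
    intro gi gj hgj hgc
    induction hv using Submodule.span_induction with
    | mem x hx =>
      obtain ⟨i', j', hj', hc', rfl⟩ := hx
      exact key gi gj i' j' hgj hj' hgc hc'
    | zero => simp [zero_pow hq0]
    | add x y hx hy px py =>
      have : ∀ k, ((pt k).1 ^ gi * (pt k).2 ^ gj) * (x + y) k ^ q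
          = ((pt k).1 ^ gi * (pt k).2 ^ gj) * x k ^ q
            + ((pt k).1 ^ gi * (pt k).2 ^ gj) * y k ^ q := by
        intro k
        rw [Pi.add_apply, hfrob, mul_add]
      rw [Finset.sum_congr rfl fun k _ => this k, Finset.sum_add_distrib, px, py, add_zero]
    | smul c x hx px =>
      have : ∀ k, ((pt k).1 ^ gi * (pt k).2 ^ gj) * (c • x) k ^ q
          = c ^ q * (((pt k).1 ^ gi * (pt k).2 ^ gj) * x k ^ q) := by
        intro k
        rw [Pi.smul_apply, smul_eq_mul, mul_pow]
        ring
      rw [Finset.sum_congr rfl fun k _ => this k, ← Finset.mul_sum, px, mul_zero]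
  induction hu using Submodule.span_induction with
  | mem x hx =>
    obtain ⟨i, j, hj, hc, rfl⟩ := hx
    exact inner i j hj hc
  | zero => simp
  | add x y hx hy px py =>
    have : ∀ k, (x + y) k * v k ^ q = x k * v k ^ q + y k * v k ^ q := by
      intro k
      rw [Pi.add_apply, add_mul]
    rw [Finset.sum_congr rfl fun k _ => this k, Finset.sum_add_distrib, px, py, add_zero]
  | smul c x hx px =>
    have : ∀ k, (c • x) k * v k ^ q = c * (x k * v k ^ q) := by
      intro k
      rw [Pi.smul_apply, smul_eq_mul, mul_assoc]
    rw [Finset.sum_congr rfl fun k _ => this k, ← Finset.mul_sum, px, mul_zero]
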